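/- Let n ∈ ℕ and let B, C, X, Z be n×n complex matrices such that X² + B·X + C = 0 and Z² + B·Z + C = 0. If the spectra of X and Z are disjoint, i.e. σ(X) ∩ σ(Z) = ∅, then the matrix X − Z is invertible (so X and Z form a complete pair of right solvents). -/
import Mathlib

open Matrix

private lemma not_isUnit_of_mulVec_eq_zero {n : ℕ} {M : Matrix (Fin n) (Fin n) ℂ}
    {v : Fin n → ℂ} (hv : v ≠ 0) (h : M *ᵥ v = 0) : ¬ IsUnit M := by
  intro hU
  have hd : IsUnit M.det := (Matrix.isUnit_iff_isUnit_det M).mp hU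
  have hz : M.det = 0 := Matrix.exists_mulVec_eq_zero_iff.mp ⟨v, hv, h⟩
  rw [hz] at hd
  exact not_isUnit_zero hd

/-- If `X`, `Z` are right solvents with disjoint spectra, then `X − Z`
is invertible, i.e. `X` and `Z` form a complete pair. -/
theorem complete_pair_of_disjoint_spectra (n : ℕ) (B C X Z : Matrix (Fin n) (Fin n) ℂ)
    (hX : X ^ 2 + B * X + C = 0) (hZ : Z ^ 2 + B * Z + C = 0)
    (hdisj : {lam : ℂ | ¬ IsUnit (lam • (1 : Matrix (Fin n) (Fin n) ℂ) - X)} ∩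
        {lam : ℂ | ¬ IsUnit (lam • (1 : Matrix (Fin n) (Fin n) ℂ) - Z)} = ∅) :
    IsUnit (X - Z) := by
  by_contra hW
  set W : Matrix (Fin n) (Fin n) ℂ := X - Z with hWdef
  -- the intertwining relation
  have key : (X + B) * W + W * Z = 0 := by
    have hk : (X + B) * W + W * Z = (X ^ 2 + B * X + C) - (Z ^ 2 + B * Z + C) := by
      rw [hWdef]; noncomm_ring
    rw [hk, hX, hZ, sub_zero]
  have hWZ : W * Z = -((X + B) * W) := eq_neg_of_add_eq_zero_right key
  -- ker W is nontrivial
  have hdet : W.det = 0 := by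
    by_contra hd
    exact hW ((Matrix.isUnit_iff_isUnit_det W).mpr (isUnit_iff_ne_zero.mpr hd))
  obtain ⟨v, hv0, hv⟩ := Matrix.exists_mulVec_eq_zero_iff.mpr hdet
  -- ker W is Z-invariant
  set K := LinearMap.ker W.mulVecLin with hK
  have hinv : ∀ x ∈ K, Z.mulVecLin x ∈ K := by
    intro x hx
    rw [hK, LinearMap.mem_ker, Matrix.mulVecLin_apply] at hx ⊢
    rw [Matrix.mulVecLin_apply, Matrix.mulVec_mulVec, hWZ, Matrix.neg_mulVec,
      ← Matrix.mulVec_mulVec, hx, Matrix.mulVec_zero, neg_zero]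
  have hvK : v ∈ K := by
    rw [hK, LinearMap.mem_ker, Matrix.mulVecLin_apply]; exact hv
  haveI : Nontrivial K := nontrivial_of_ne ⟨v, hvK⟩ 0 (by
    intro h
    exact hv0 (congrArg Subtype.val h))
  -- restricted endomorphism has an eigenvalue
  let f : K →ₗ[ℂ] K := Z.mulVecLin.restrict hinv
  obtain ⟨μ, hμ⟩ := Module.End.exists_eigenvalue f
  obtain ⟨w, hw⟩ := hμ.exists_hasEigenvector
  have hw0 : (w : Fin n → ℂ) ≠ 0 := fun h => hw.2 (Subtype.ext h)
  have hZw : Z *ᵥ (w : Fin n → ℂ) = μ • (w : Fin n → ℂ) := by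
    have := hw.apply_eq_smul
    have h2 : (f w : Fin n → ℂ) = μ • (w : Fin n → ℂ) := by
      rw [this]; rfl
    rw [← h2]
    simp [f, LinearMap.restrict_apply, Matrix.mulVecLin_apply]
  have hWw : W *ᵥ (w : Fin n → ℂ) = 0 := by
    have h : W.mulVecLin (w : Fin n → ℂ) = 0 := w.2
    exact h
  have hXw : X *ᵥ (w : Fin n → ℂ) = μ • (w : Fin n → ℂ) := by
    have : X = W + Z := by rw [hWdef]; abel
    rw [this, Matrix.add_mulVec, hWw, hZw, zero_add]
  have hμX : ¬ IsUnit (μ • (1 : Matrix (Fin n) (Fin n) ℂ) - X) := by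
    apply not_isUnit_of_mulVec_eq_zero hw0
    rw [Matrix.sub_mulVec, Matrix.smul_mulVec, Matrix.one_mulVec, hXw, sub_self]
  have hμZ : ¬ IsUnit (μ • (1 : Matrix (Fin n) (Fin n) ℂ) - Z) := by
    apply not_isUnit_of_mulVec_eq_zero hw0
    rw [Matrix.sub_mulVec, Matrix.smul_mulVec, Matrix.one_mulVec, hZw, sub_self]
  have : μ ∈ ({lam : ℂ | ¬ IsUnit (lam • (1 : Matrix (Fin n) (Fin n) ℂ) - X)} ∩
      {lam : ℂ | ¬ IsUnit (lam • (1 : Matrix (Fin n) (Fin n) ℂ) - Z)}) := ⟨hμX, hμZ⟩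
  rw [hdisj] at this
  exact this
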